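/- Let A and B be d×d real symmetric positive semidefinite matrices, and let √A denote the unique positive semidefinite square root of A. Then Tr(A) + Tr(B) − 2 Tr((√A · B · √A)^{1/2}) ≥ 0, and this quantity equals 0 when A = B. -/

import Mathlib

open Matrix
open scoped Classical

/-- The unique positive semidefinite square root of a positive semidefinite real matrix
(junk value `0` on matrices that are not positive semidefinite). -/
noncomputable def psdSqrt {d : ℕ} (M : Matrix (Fin d) (Fin d) ℝ) :
    Matrix (Fin d) (Fin d) ℝ :=
  if h : M.PosSemidef then
    h.1.eigenvectorUnitary.1 * diagonal ((↑) ∘ (√·) ∘ h.1.eigenvalues) *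
      (star h.1.eigenvectorUnitary : Matrix (Fin d) (Fin d) ℝ)
  else 0

/-- local replacement for the removed `Matrix.PosSemidef.sqrt` -/
noncomputable def Matrix.PosSemidef.sqrt {d : ℕ} {M : Matrix (Fin d) (Fin d) ℝ}
    (h : M.PosSemidef) : Matrix (Fin d) (Fin d) ℝ :=
  h.1.eigenvectorUnitary.1 * diagonal ((↑) ∘ (√·) ∘ h.1.eigenvalues) *
    (star h.1.eigenvectorUnitary : Matrix (Fin d) (Fin d) ℝ)

open scoped MatrixOrder in
lemma Matrix.PosSemidef.sqrt_eq_cfcSqrt {d : ℕ} {M : Matrix (Fin d) (Fin d) ℝ}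
    (h : M.PosSemidef) : h.sqrt = CFC.sqrt M := by
  rw [CFC.sqrt_eq_cfc, cfc_nnreal_eq_real _ M, h.1.cfc_eq]
  simp only [Matrix.PosSemidef.sqrt, IsHermitian.cfc, Unitary.conjStarAlgAut_apply]
  congr 3
  funext i
  simp [Real.coe_sqrt, Real.coe_toNNReal', max_eq_left (h.eigenvalues_nonneg i)]

open scoped MatrixOrder in
lemma Matrix.PosSemidef.posSemidef_sqrt {d : ℕ} {M : Matrix (Fin d) (Fin d) ℝ}
    (h : M.PosSemidef) : h.sqrt.PosSemidef := by
  rw [h.sqrt_eq_cfcSqrt]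
  exact (CFC.sqrt_nonneg M).posSemidef

open scoped MatrixOrder in
lemma Matrix.PosSemidef.sqrt_mul_self {d : ℕ} {M : Matrix (Fin d) (Fin d) ℝ}
    (h : M.PosSemidef) : h.sqrt * h.sqrt = M := by
  rw [h.sqrt_eq_cfcSqrt]
  exact CFC.sqrt_mul_sqrt_self M h.nonneg

open scoped MatrixOrder in
lemma Matrix.PosSemidef.sqrt_sq {d : ℕ} {M : Matrix (Fin d) (Fin d) ℝ}
    (h : M.PosSemidef) : (h.pow 2).sqrt = M := by
  rw [(h.pow 2).sqrt_eq_cfcSqrt]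
  exact CFC.sqrt_sq M h.nonneg

variable {d : ℕ}

private lemma dotmv (C : Matrix (Fin d) (Fin d) ℝ) (a b : Fin d → ℝ) :
    (C *ᵥ a) ⬝ᵥ b = a ⬝ᵥ (Cᵀ *ᵥ b) := by
  rw [dotProduct_comm, dotProduct_mulVec, dotProduct_comm, mulVec_transpose]

private lemma dself_nonneg (a : Fin d → ℝ) : 0 ≤ a ⬝ᵥ a :=
  Finset.sum_nonneg fun _ _ => mul_self_nonneg _

/-- trace of PSD matrix is nonneg -/
private lemma psd_trace_nonneg {M : Matrix (Fin d) (Fin d) ℝ} (hM : M.PosSemidef) :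
    0 ≤ M.trace := by
  rw [Matrix.trace]
  refine Finset.sum_nonneg fun i _ => ?_
  have := hM.dotProduct_mulVec_nonneg (Pi.single i 1)
  simpa [Matrix.diag, dotProduct, mulVec, Pi.single_apply, Finset.sum_ite_eq',
    Finset.sum_ite_eq] using this

/-- key inequality -/
private lemma traceConj (C W : Matrix (Fin d) (Fin d) ℝ) :
    (star W * C * W).trace = ∑ i, (fun k => W k i) ⬝ᵥ (C *ᵥ fun k => W k i) := by
  rw [Matrix.trace]
  refine Finset.sum_congr rfl fun i _ => ?_
  simp only [Matrix.diag_apply, Matrix.mul_apply, mulVec, dotProduct, conjTranspose_apply,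
    star_trivial, Finset.sum_mul, Finset.mul_sum]
  rw [Finset.sum_comm]
  refine Finset.sum_congr rfl fun l _ => Finset.sum_congr rfl fun k _ => ?_
  simp only [Matrix.star_apply, star_trivial]
  ring

private lemma key (A B : Matrix (Fin d) (Fin d) ℝ) (hA : A.PosSemidef) (hB : B.PosSemidef)
    (hM : (hA.sqrt * B * hA.sqrt).PosSemidef) :
    2 * hM.sqrt.trace ≤ A.trace + B.trace := by
  set S := hA.sqrt with hSdef
  set T := hB.sqrt with hTdef
  have hS : S.PosSemidef := hA.posSemidef_sqrt
  have hT : T.PosSemidef := hB.posSemidef_sqrt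
  have hSsym : Sᵀ = S := hS.1
  have hTsym : Tᵀ = T := hT.1
  have hSS : S * S = A := hA.sqrt_mul_self
  have hTT : T * T = B := hB.sqrt_mul_self
  set X := T * S with hXdef
  have hXM : Xᵀ * X = S * B * S := by
    rw [hXdef, transpose_mul, hSsym, hTsym, ← hTT]; noncomm_ring
  set R := hM.sqrt with hRdef
  have hR : R.PosSemidef := hM.posSemidef_sqrt
  have hRR : R * R = S * B * S := hM.sqrt_mul_self
  have hH : R.IsHermitian := hR.1
  set V : Matrix (Fin d) (Fin d) ℝ := (hH.eigenvectorUnitary : Matrix (Fin d) (Fin d) ℝ) with hV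
  set σ : Fin d → ℝ := hH.eigenvalues with hσ
  have hσ0 : ∀ i, 0 ≤ σ i := hR.eigenvalues_nonneg
  have h1 : star V * V = 1 :=
    (Matrix.mem_unitaryGroup_iff').mp (Matrix.IsHermitian.eigenvectorUnitary hH).2
  have h2 : V * star V = 1 :=
    (Matrix.mem_unitaryGroup_iff).mp (Matrix.IsHermitian.eigenvectorUnitary hH).2
  have hsp : R = V * diagonal σ * star V := by
    have hst := hH.spectral_theorem
    rw [Unitary.conjStarAlgAut_apply] at hst
    exact hst
  -- trace R = ∑ σ
  have htrR : R.trace = ∑ i, σ i := by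
    rw [hsp, Matrix.trace_mul_cycle, h1, one_mul, Matrix.trace_diagonal]
  -- columns of V
  set v : Fin d → Fin d → ℝ := fun i k => V k i with hv
  have hVcol : ∀ i j, v i ⬝ᵥ v j = if i = j then 1 else 0 := by
    intro i j
    have := congrFun (congrFun h1 i) j
    simpa [Matrix.mul_apply, Matrix.one_apply, dotProduct, conjTranspose_apply, hv,
      mul_comm] using this
  -- R *ᵥ v i = σ i • v i
  have hRv : ∀ i, R *ᵥ v i = σ i • v i := by
    intro i
    have hRV : R * V = V * diagonal σ := by
      rw [hsp, mul_assoc, h1, mul_one]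
    funext k
    have := congrFun (congrFun hRV k) i
    simp only [Matrix.mul_apply, Matrix.diagonal_apply, mul_ite, mul_zero,
      Finset.sum_ite_eq', Finset.mem_univ, if_true] at this
    simpa [mulVec, dotProduct, hv, mul_comm] using this
  have hMsym : (S * B * S)ᵀ = S * B * S := by
    rw [← conjTranspose_eq_transpose_of_trivial]; exact hM.1
  have hMv : ∀ i, (S * B * S) *ᵥ v i = (σ i ^ 2) • v i := by
    intro i
    rw [← hRR, ← mulVec_mulVec, hRv, mulVec_smul, hRv, smul_smul, sq]
  -- ‖X v i‖² = σ i ^ 2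
  have hXv : ∀ i, (X *ᵥ v i) ⬝ᵥ (X *ᵥ v i) = σ i ^ 2 := by
    intro i
    rw [dotmv, mulVec_mulVec, ← transpose_transpose X, ← transpose_mul, transpose_transpose,
      hXM, hMsym, hMv]
    simp [dotProduct_smul, hVcol i i]
  -- define u
  set u : Fin d → Fin d → ℝ := fun i => if σ i = 0 then 0 else (σ i)⁻¹ • (X *ᵥ v i) with hu
  have hXu : ∀ i, X *ᵥ v i = σ i • u i := by
    intro i
    by_cases h : σ i = 0
    · have : (X *ᵥ v i) ⬝ᵥ (X *ᵥ v i) = 0 := by rw [hXv, h]; ring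
      rw [dotProduct_self_eq_zero] at this
      simp [hu, h, this]
    · simp [hu, h, smul_smul, mul_inv_cancel₀ h]
  have huu : ∀ i j, u i ⬝ᵥ u j = if i = j ∧ σ i ≠ 0 then 1 else 0 := by
    intro i j
    by_cases hi : σ i = 0
    · simp [hu, hi]
    by_cases hj : σ j = 0
    · have hij : i ≠ j := fun h => hi (h ▸ hj)
      simp [hu, hj, hij]
    have hXvij : (X *ᵥ v i) ⬝ᵥ (X *ᵥ v j) = σ j ^ 2 * (if i = j then 1 else 0) := by
      rw [dotmv, mulVec_mulVec, ← transpose_transpose X, ← transpose_mul, transpose_transpose,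
        hXM, hMsym, hMv]
      simp [dotProduct_smul, hVcol i j, mul_comm]
    simp only [hu, if_neg hi, if_neg hj, smul_dotProduct, dotProduct_smul, hXvij]
    by_cases hij : i = j
    · subst hij
      simp only [if_pos rfl, ne_eq, hi, not_false_eq_true, and_self, if_true, mul_one]
      field_simp
      ring_nf
      rw [← mul_pow, mul_inv_cancel₀ hi, one_pow]
    · simp [hij]
  -- σ i = u i ⬝ (X *ᵥ v i)
  have hσu : ∀ i, σ i = u i ⬝ᵥ (X *ᵥ v i) := by
    intro i
    rw [hXu, dotProduct_smul, huu]
    by_cases h : σ i = 0 <;> simp [h]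
  -- σ i ≤ (Tu⬝Tu + Sv⬝Sv)/2
  have hbound : ∀ i, σ i ≤ ((T *ᵥ u i) ⬝ᵥ (T *ᵥ u i) + (S *ᵥ v i) ⬝ᵥ (S *ᵥ v i)) / 2 := by
    intro i
    have h3 : u i ⬝ᵥ (X *ᵥ v i) = (T *ᵥ u i) ⬝ᵥ (S *ᵥ v i) := by
      rw [hXdef, ← mulVec_mulVec, dotmv T (u i) (S *ᵥ v i), hTsym]
    have h4 := dself_nonneg ((T *ᵥ u i) - (S *ᵥ v i))
    rw [sub_dotProduct, dotProduct_sub, dotProduct_sub,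
      dotProduct_comm (S *ᵥ v i) (T *ᵥ u i)] at h4
    rw [hσu i, h3]
    linarith
  -- A side
  have hAside : ∑ i, (S *ᵥ v i) ⬝ᵥ (S *ᵥ v i) = A.trace := by
    have : ∀ i, (S *ᵥ v i) ⬝ᵥ (S *ᵥ v i) = v i ⬝ᵥ (A *ᵥ v i) := by
      intro i
      rw [dotmv, mulVec_mulVec, hSsym, hSS]
    rw [Finset.sum_congr rfl fun i _ => this i]
    have := (traceConj A V).symm
    simp only [hv]
    rw [this, Matrix.trace_mul_cycle, h2, one_mul]
  -- B side
  set U : Matrix (Fin d) (Fin d) ℝ := Matrix.of (fun k i => u i k) with hU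
  set ε : Fin d → ℝ := fun i => if σ i = 0 then 0 else 1 with hε
  have hUU : star U * U = diagonal ε := by
    ext i j
    have h5 : (star U * U) i j = u i ⬝ᵥ u j := by
      simp [Matrix.mul_apply, Matrix.star_apply, dotProduct, hU]
    rw [h5, huu, Matrix.diagonal_apply]
    by_cases hij : i = j
    · subst hij; by_cases h : σ i = 0 <;> simp [hε, h]
    · simp [hij]
  have hUε : U * diagonal ε = U := by
    ext k i
    by_cases h : σ i = 0 <;>
      simp [h, hu, hU, hε, Matrix.mul_diagonal]
  set P : Matrix (Fin d) (Fin d) ℝ := U * star U with hP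
  have hPP : P * P = P := by
    rw [hP, mul_assoc, ← mul_assoc (star U), hUU, ← mul_assoc, hUε]
  set Q : Matrix (Fin d) (Fin d) ℝ := 1 - P with hQ
  have hQQ : Q * Q = Q := by
    rw [hQ, sub_mul, mul_sub, mul_sub, one_mul, mul_one, hPP]
    noncomm_ring
  have hPstar : star P = P := by rw [hP, Matrix.star_mul, star_star]
  have hPsym : Pᵀ = P := by
    rw [← conjTranspose_eq_transpose_of_trivial, ← Matrix.star_eq_conjTranspose]
    exact hPstar
  have hQsym : Qᵀ = Q := by
    rw [hQ, transpose_sub, transpose_one, hPsym]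
  have hQpsd : Q.PosSemidef := by
    refine Matrix.PosSemidef.of_dotProduct_mulVec_nonneg ?_ ?_
    · show Qᴴ = Q
      rw [conjTranspose_eq_transpose_of_trivial, hQsym]
    · intro x
      have h6 : x ⬝ᵥ (Q *ᵥ x) = (Q *ᵥ x) ⬝ᵥ (Q *ᵥ x) := by
        calc x ⬝ᵥ (Q *ᵥ x) = x ⬝ᵥ (Qᵀ *ᵥ (Q *ᵥ x)) := by
              rw [hQsym, mulVec_mulVec, hQQ]
          _ = (Q *ᵥ x) ⬝ᵥ (Q *ᵥ x) := (dotmv Q x (Q *ᵥ x)).symm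
      rw [star_trivial, h6]
      exact dself_nonneg _
  have hBside : ∑ i, (T *ᵥ u i) ⬝ᵥ (T *ᵥ u i) ≤ B.trace := by
    have e1 : ∀ i, (T *ᵥ u i) ⬝ᵥ (T *ᵥ u i) = u i ⬝ᵥ (B *ᵥ u i) := by
      intro i
      rw [dotmv, mulVec_mulVec, hTsym, hTT]
    rw [Finset.sum_congr rfl fun i _ => e1 i]
    have e2 : ∑ i, u i ⬝ᵥ (B *ᵥ u i) = (star U * B * U).trace := by
      rw [traceConj]
      exact Finset.sum_congr rfl fun i _ => rfl
    rw [e2]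
    have e3 : (star U * B * U).trace = (P * B).trace := by
      rw [Matrix.trace_mul_cycle, ← hP]
    have h7 : T * Q * T = B - T * P * T := by
      rw [hQ, mul_sub, mul_one, sub_mul, hTT]
    have h8 : (T * P * T).trace = (P * B).trace := by
      rw [Matrix.trace_mul_cycle, hTT, Matrix.trace_mul_comm]
    have e4 : (T * Q * T).trace = B.trace - (P * B).trace := by
      rw [h7, Matrix.trace_sub, h8]
    have e5 : 0 ≤ (T * Q * T).trace := by
      have : (T * Q * Tᴴ).PosSemidef := hQpsd.mul_mul_conjTranspose_same T
      rw [conjTranspose_eq_transpose_of_trivial, hTsym] at this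
      exact psd_trace_nonneg this
    rw [e3] at *
    linarith
  have hsum : ∑ i, σ i ≤ (∑ i, (T *ᵥ u i) ⬝ᵥ (T *ᵥ u i) + ∑ i, (S *ᵥ v i) ⬝ᵥ (S *ᵥ v i)) / 2 := by
    calc ∑ i, σ i ≤ ∑ i, ((T *ᵥ u i) ⬝ᵥ (T *ᵥ u i) + (S *ᵥ v i) ⬝ᵥ (S *ᵥ v i)) / 2 :=
          Finset.sum_le_sum fun i _ => hbound i
      _ = _ := by rw [← Finset.sum_div, Finset.sum_add_distrib]
  rw [htrR]
  rw [hAside] at hsum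
  linarith


/-- For symmetric positive semidefinite `d × d` real matrices `A` and `B`,
the Bures quantity `Tr(A) + Tr(B) − 2 Tr((√A · B · √A)^{1/2})` is nonnegative, and it
equals `0` when `A = B`. -/
theorem bures_nonneg_and_eq_zero_of_eq {d : ℕ}
    (A B : Matrix (Fin d) (Fin d) ℝ) (hA : A.PosSemidef) (hB : B.PosSemidef) :
    0 ≤ A.trace + B.trace - 2 * (psdSqrt (psdSqrt A * B * psdSqrt A)).trace ∧
      (A = B → A.trace + B.trace - 2 * (psdSqrt (psdSqrt A * B * psdSqrt A)).trace = 0) := by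
  have hPA : psdSqrt A = hA.sqrt := by simp only [psdSqrt]; rw [dif_pos hA]; rfl
  have hM : (hA.sqrt * B * hA.sqrt).PosSemidef := by
    have h0 := hB.mul_mul_conjTranspose_same hA.sqrt
    rwa [hA.posSemidef_sqrt.1] at h0
  have hPM : psdSqrt (hA.sqrt * B * hA.sqrt) = hM.sqrt := by
    simp only [psdSqrt]; rw [dif_pos hM]; rfl
  constructor
  · rw [hPA, hPM]
    have := key A B hA hB hM
    linarith
  · rintro rfl
    rw [hPA]
    have e : hA.sqrt * A * hA.sqrt = A ^ 2 := by
      have h1 : hA.sqrt * A * hA.sqrt = hA.sqrt * (hA.sqrt * hA.sqrt) * hA.sqrt := by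
        rw [hA.sqrt_mul_self]
      have h2 : hA.sqrt * (hA.sqrt * hA.sqrt) * hA.sqrt
          = (hA.sqrt * hA.sqrt) * (hA.sqrt * hA.sqrt) := by noncomm_ring
      have h3 : (hA.sqrt * hA.sqrt) * (hA.sqrt * hA.sqrt) = A ^ 2 := by
        rw [hA.sqrt_mul_self, pow_two]
      exact h1.trans (h2.trans h3)
    rw [e]
    have e2 : psdSqrt (A ^ 2) = A := by
      simp only [psdSqrt]
      rw [dif_pos (hA.pow 2)]
      exact hA.sqrt_sq
    rw [e2]
    ring
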